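/- Let k ≥ 3 and m ≥ 2 be integers with m odd and not divisible by 3, let N = k·m, and let l be an integer with l² ≡ 1 (mod k). If m ≡ −l (mod k), then the (lm+2 mod N)-monomial minimal solution of (E_N) has size 6m; if m ≡ l (mod k), then the (lm−2 mod N)-monomial minimal solution of (E_N) has size 6m. -/

import Mathlib

namespace Monomial

/-- The elementary matrix `[[a, -1], [1, 0]]` over `ZMod N`. -/
def mat {N : ℕ} (a : ZMod N) : Matrix (Fin 2) (Fin 2) (ZMod N) := !![a, -1; 1, 0]

/-- `M [a₁, …, aₙ] = mat aₙ * ⋯ * mat a₁`. -/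
def M {N : ℕ} (l : List (ZMod N)) : Matrix (Fin 2) (Fin 2) (ZMod N) :=
  (l.reverse.map mat).prod

/-- A tuple is a solution of (E_N) if the associated matrix is `±Id`. -/
def IsSolution {N : ℕ} (l : List (ZMod N)) : Prop := M l = 1 ∨ M l = -1

/-- The sum `(a₁,…,aₙ) ⊕ (b₁,…,bₘ) = (a₁+bₘ, a₂,…,aₙ₋₁, aₙ+b₁, b₂,…,bₘ₋₁)`. -/
def osum {N : ℕ} (u v : List (ZMod N)) : List (ZMod N) :=
  (u.headI + v.getLastD 0) ::
    ((u.drop 1).dropLast ++ (u.getLastD 0 + v.headI) :: (v.drop 1).dropLast)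

/-- Equivalence: `v` is a cyclic permutation of `u` or of the reversal of `u`. -/
def CyclicEquiv {N : ℕ} (u v : List (ZMod N)) : Prop :=
  (∃ i, v = u.rotate i) ∨ (∃ i, v = u.reverse.rotate i)

/-- A tuple is reducible if, up to equivalence, it is a sum of an `m`-tuple (`m ≥ 3`)
with a solution of size `l ≥ 3`. -/
def Reducible {N : ℕ} (c : List (ZMod N)) : Prop :=
  ∃ a b : List (ZMod N), 3 ≤ a.length ∧ 3 ≤ b.length ∧ IsSolution b ∧
    CyclicEquiv c (osum a b)

/-- An irreducible solution: a solution which is not reducible (and `(0,0)` is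
not considered irreducible). -/
def IrreducibleSol {N : ℕ} (c : List (ZMod N)) : Prop :=
  IsSolution c ∧ ¬ Reducible c ∧ c ≠ [0, 0]

/-- The size of the `k`-monomial minimal solution of (E_N): the least `n > 0` such
that the constant `n`-tuple `(k, …, k)` is a solution. -/
noncomputable def monomialMinimalSize (N : ℕ) (k : ZMod N) : ℕ :=
  sInf {n | 0 < n ∧ IsSolution (List.replicate n k)}

/-- `N` is monomially irreducible if, for every `k ≠ 0`, the `k`-monomial minimal
solution of (E_N) is irreducible. -/
def MonomiallyIrreducible (N : ℕ) : Prop :=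
  ∀ k : ZMod N, k ≠ 0 → IrreducibleSol (List.replicate (monomialMinimalSize N k) k)

/-- The continuant `Kₙ(x, …, x)` at a constant tuple: `K₀ = 1`, `K₁ = x`,
`Kₙ₊₂ = x * Kₙ₊₁ - Kₙ`. -/
def K {N : ℕ} (x : ZMod N) : ℕ → ZMod N
  | 0 => 1
  | 1 => x
  | n + 2 => x * K x (n + 1) - K x n

private def f6 : ℕ → ℤ
  | 0 => 1 | 1 => 1 | 2 => 0 | 3 => -1 | 4 => -1 | _ => 0

def cseq (n : ℕ) : ℤ := f6 (n % 6)

lemma cseq_rec (n : ℕ) : cseq (n + 2) = cseq (n + 1) - cseq n := by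
  unfold cseq
  rw [Nat.add_mod n 2, Nat.add_mod n 1]
  have h : n % 6 < 6 := Nat.mod_lt _ (by norm_num)
  set r := n % 6 with hr
  interval_cases r <;> decide

section Basic

variable {N : ℕ}

lemma K_rec (x : ZMod N) (n : ℕ) : K x (n+2) = x * K x (n+1) - K x n := rfl

lemma Keq (x : ZMod N) (F : ℕ → ZMod N) (h0 : F 0 = 1) (h1 : F 1 = x)
    (hrec : ∀ n, F (n+2) = x * F (n+1) - F n) : ∀ n, K x n = F n := by
  have key : ∀ n, K x n = F n ∧ K x (n+1) = F (n+1) := by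
    intro n
    induction n with
    | zero => exact ⟨h0.symm, h1.symm⟩
    | succ n ih => exact ⟨ih.2, by rw [K_rec, hrec, ih.1, ih.2]⟩
  exact fun n => (key n).1

lemma M_replicate (n : ℕ) (x : ZMod N) : M (List.replicate n x) = mat x ^ n := by
  unfold M
  rw [List.reverse_replicate, List.map_replicate, List.prod_replicate]

lemma matpow (x : ZMod N) :
    ∀ t, mat x ^ (t+2) = !![K x (t+2), -K x (t+1); K x (t+1), -K x t] := by
  intro t
  induction t with
  | zero =>
      show mat x ^ 2 = _
      rw [pow_two]
      simp [mat, K, Matrix.mul_fin_two]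
      ring_nf
  | succ t ih =>
      rw [show t+1+2 = (t+2)+1 from rfl, pow_succ, ih]
      simp [mat, Matrix.mul_fin_two, K_rec]
      ring_nf
      exact ⟨trivial, trivial⟩

lemma pow_eq_one_iff (x : ZMod N) (t : ℕ) :
    mat x ^ (t+2) = 1 ↔ K x (t+1) = 0 ∧ K x (t+2) = 1 := by
  rw [matpow, Matrix.one_fin_two]
  constructor
  · intro h
    rw [← Matrix.ext_iff] at h
    have h10 := h 1 0
    have h00 := h 0 0
    simp at h10 h00
    exact ⟨h10, h00⟩
  · rintro ⟨h1, h2⟩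
    have h0 : K x t = -1 := by
      have := K_rec x t
      rw [h1, h2] at this
      linear_combination this
    rw [h1, h2, h0]
    norm_num

lemma pow_eq_negone_iff (x : ZMod N) (t : ℕ) :
    mat x ^ (t+2) = -1 ↔ K x (t+1) = 0 ∧ K x (t+2) = -1 := by
  rw [matpow, Matrix.one_fin_two]
  constructor
  · intro h
    rw [← Matrix.ext_iff] at h
    have h10 := h 1 0
    have h00 := h 0 0
    simp at h10 h00
    exact ⟨h10, h00⟩
  · rintro ⟨h1, h2⟩
    have h0 : K x t = 1 := by
      have := K_rec x t
      rw [h1, h2] at this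
      linear_combination this
    rw [h1, h2, h0]
    norm_num

lemma isSol_iff (x : ZMod N) (t : ℕ) :
    IsSolution (List.replicate (t+2) x) ↔
      (K x (t+1) = 0 ∧ (K x (t+2) = 1 ∨ K x (t+2) = -1)) := by
  rw [IsSolution, M_replicate, pow_eq_one_iff, pow_eq_negone_iff]
  tauto

lemma one_eq_zero_of_sol_one {x : ZMod N} (h : IsSolution [x]) : (1 : ZMod N) = 0 := by
  have hM : M [x] = mat x := by simp [M]
  rcases h with h | h <;> rw [hM] at h <;>
    [skip; skip] <;>
  · rw [← Matrix.ext_iff] at h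
    have := h 1 0
    simpa [mat, Matrix.one_apply] using this

lemma K_neg (x : ZMod N) (n : ℕ) : K (-x) n = (-1)^n * K x n := by
  refine Keq (-x) (fun n => (-1)^n * K x n) (by simp [show K x 0 = 1 from rfl])
    (by simp [show K x 1 = x from rfl]) (fun n => ?_) n
  rw [K_rec]
  ring

lemma isSol_neg (x : ZMod N) (n : ℕ) (h : IsSolution (List.replicate n x)) :
    IsSolution (List.replicate n (-x)) := by
  match n with
  | 0 => exact h
  | 1 =>
      haveI : Subsingleton (ZMod N) := subsingleton_of_zero_eq_one
        (one_eq_zero_of_sol_one (by simpa using h)).symm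
      left
      exact Subsingleton.elim _ _
  | (t+2) =>
      rw [isSol_iff] at h ⊢
      obtain ⟨h1, h2⟩ := h
      constructor
      · rw [K_neg, h1, mul_zero]
      · rw [K_neg]
        rcases Nat.even_or_odd (t+2) with he | ho
        · rw [he.neg_one_pow, one_mul]; exact h2
        · rw [ho.neg_one_pow]
          rcases h2 with h2 | h2 <;> rw [h2] <;> simp

lemma isSol_neg_iff (x : ZMod N) (n : ℕ) :
    IsSolution (List.replicate n (-x)) ↔ IsSolution (List.replicate n x) := by
  constructor
  · intro h
    have := isSol_neg (-x) n h
    rwa [neg_neg] at this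
  · exact isSol_neg x n

lemma size_neg (x : ZMod N) :
    monomialMinimalSize N (-x) = monomialMinimalSize N x := by
  unfold monomialMinimalSize
  congr 1
  ext n
  simp [isSol_neg_iff]

end Basic

section Maps

lemma Kmap {N N' : ℕ} (φ : ZMod N →+* ZMod N') (x : ZMod N) (n : ℕ) :
    K (φ x) n = φ (K x n) := by
  refine Keq (φ x) (fun n => φ (K x n)) (by simp [show K x 0 = 1 from rfl])
    (by simp [show K x 1 = x from rfl]) (fun n => ?_) n
  rw [K_rec, map_sub, map_mul]

lemma K_two {n : ℕ} (j : ℕ) : K (2 : ZMod n) j = ((j+1 : ℕ) : ZMod n) := by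
  refine Keq 2 (fun j => ((j+1 : ℕ) : ZMod n)) (by norm_num) (by norm_num) (fun j => ?_) j
  push_cast
  ring

lemma K_oneval {n : ℕ} (j : ℕ) : K (1 : ZMod n) j = ((cseq j : ℤ) : ZMod n) := by
  refine Keq 1 (fun j => ((cseq j : ℤ) : ZMod n)) (by norm_num [cseq, f6])
    (by norm_num [cseq, f6]) (fun j => ?_) j
  rw [cseq_rec]
  push_cast
  ring

end Maps

section Main

/-- Main case-1 lemma. -/
lemma main_case1 (k m : ℕ) (hk : 3 ≤ k) (hm : 3 ≤ m) (hco : Nat.Coprime 6 m)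
    (l : ℤ) (hdvd : (k : ℤ) ∣ l * m + 1) :
    monomialMinimalSize (k * m) ((l * m + 2 : ℤ) : ZMod (k * m)) = 6 * m := by
  haveI : NeZero m := ⟨by omega⟩
  haveI : NeZero k := ⟨by omega⟩
  haveI : NeZero (k * m) := ⟨by positivity⟩
  set R := ZMod (k * m)
  set y : R := ((l * m + 2 : ℤ) : R) with hy
  obtain ⟨c, hc⟩ := hdvd
  -- key congruence facts
  have hkm : ((k : R) * (m : R)) = 0 := by
    have := ZMod.natCast_self (k * m)
    push_cast at this
    exact this
  have hcR : (l : R) * (m : R) + 1 = (k : R) * (c : R) := by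
    have := congrArg (fun z : ℤ => (z : R)) hc
    push_cast [R] at this
    exact this
  have hkey : (m : R) * (1 + (l : R) * (m : R)) = 0 := by
    linear_combination (m : R) * hcR + (c : R) * hkm
  -- closed form for K y
  have Kform : ∀ j, K y j =
      ((j+1 : ℕ) : R) * (1 + (l : R) * (m : R)) - (l : R) * (m : R) * ((cseq j : ℤ) : R) := by
    refine Keq y _ ?_ ?_ ?_
    · show ((0+1 : ℕ) : R) * _ - _ * ((cseq 0 : ℤ) : R) = 1
      norm_num [cseq, f6]
    · show ((1+1 : ℕ) : R) * _ - _ * ((cseq 1 : ℤ) : R) = y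
      rw [hy]
      norm_num [cseq, f6]
      push_cast [R]
      ring
    · intro j
      rw [cseq_rec, hy]
      push_cast [R]
      linear_combination (-(l : R) * (((j : ℕ) : R) + 2 - ((cseq (j+1) : ℤ) : R))) * hkey
  -- the solution of size 6m
  have upper : IsSolution (List.replicate (6*m) y) := by
    rw [show 6*m = (6*m-2)+2 by omega, isSol_iff]
    constructor
    · rw [Kform]
      have hc5 : cseq (6*m-2+1) = 0 := by
        unfold cseq
        rw [show (6*m-2+1) % 6 = 5 by omega]
        rfl
      rw [hc5, show 6*m-2+1+1 = 6*m by omega]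
      push_cast [R]
      linear_combination 6 * hkey
    · left
      rw [Kform]
      have hc0 : cseq (6*m-2+2) = 1 := by
        unfold cseq
        rw [show (6*m-2+2) % 6 = 0 by omega]
        rfl
      rw [hc0, show 6*m-2+2+1 = 6*m+1 by omega]
      push_cast [R]
      linear_combination 6 * hkey
  -- homomorphisms
  set φ : ZMod (k*m) →+* ZMod m := ZMod.castHom (dvd_mul_left m k) (ZMod m)
  set ψ : ZMod (k*m) →+* ZMod k := ZMod.castHom (dvd_mul_right k m) (ZMod k)
  have hφy : φ y = 2 := by
    rw [hy, map_intCast]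
    push_cast
    simp [ZMod.natCast_self]
  have hψy : ψ y = 1 := by
    rw [hy, map_intCast, show (l * m + 2 : ℤ) = (k : ℤ) * c + 1 by linarith]
    push_cast
    simp [ZMod.natCast_self]
  -- lower bound: any solution size is a multiple of 6m
  have honeN : (1 : ZMod k) = 0 → False := by
    intro h
    have : ((1:ℕ) : ZMod k) = 0 := by exact_mod_cast h
    rw [ZMod.natCast_eq_zero_iff] at this
    have := Nat.dvd_one.mp this
    omega
  have htwoN : (2 : ZMod k) = 0 → False := by
    intro h
    have : ((2:ℕ) : ZMod k) = 0 := by exact_mod_cast h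
    rw [ZMod.natCast_eq_zero_iff] at this
    have := Nat.le_of_dvd two_pos this
    omega
  have lower : ∀ n, 0 < n → IsSolution (List.replicate n y) → 6*m ∣ n := by
    intro n hn hsol
    match n, hn with
    | 1, _ =>
        exfalso
        have h10 := one_eq_zero_of_sol_one (by simpa using hsol)
        have : ((1:ℕ) : R) = 0 := by exact_mod_cast h10
        rw [ZMod.natCast_eq_zero_iff] at this
        have := Nat.le_of_dvd one_pos this
        nlinarith
    | (t+2), _ =>
        rw [isSol_iff] at hsol
        obtain ⟨hK1, hK2⟩ := hsol
        -- mod m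
        have e1 : ((t+2 : ℕ) : ZMod m) = 0 := by
          have := congrArg φ hK1
          rw [← Kmap, hφy, K_two, map_zero] at this
          exact_mod_cast this
        rw [ZMod.natCast_eq_zero_iff] at e1
        -- determine sign
        have hsign : K y (t+2) = 1 := by
          rcases hK2 with h | h
          · exact h
          · exfalso
            have := congrArg φ h
            rw [← Kmap, hφy, K_two] at this
            obtain ⟨q, hq⟩ := e1
            rw [show t+2+1 = m*q+1 by omega] at this
            push_cast at this
            simp [ZMod.natCast_self] at this
            have h2 : ((2:ℕ) : ZMod m) = 0 := by
              push_cast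
              linear_combination this
            rw [ZMod.natCast_eq_zero_iff] at h2
            have := Nat.le_of_dvd two_pos h2
            omega
        -- mod k
        have e2 : ((cseq (t+1) : ℤ) : ZMod k) = 0 := by
          have := congrArg ψ hK1
          rw [← Kmap, hψy, K_oneval, map_zero] at this
          exact this
        have e3 : ((cseq (t+2) : ℤ) : ZMod k) = 1 := by
          have := congrArg ψ hsign
          rw [← Kmap, hψy, K_oneval, map_one] at this
          exact this
        have hr : (t+1) % 6 < 6 := Nat.mod_lt _ (by norm_num)
        have h6 : 6 ∣ t + 2 := by
          set r := (t+1) % 6 with hrdef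
          have hc1 : cseq (t+1) = f6 r := by unfold cseq; rw [← hrdef]
          have hc2 : cseq (t+2) = f6 ((r+1) % 6) := by
            unfold cseq
            rw [show (t+2) % 6 = (r+1) % 6 by omega]
          interval_cases r
          · exfalso
            rw [hc1, show f6 0 = 1 by decide] at e2
            rw [Int.cast_one] at e2
            exact honeN e2
          · exfalso
            rw [hc1, show f6 1 = 1 by decide] at e2
            rw [Int.cast_one] at e2
            exact honeN e2
          · exfalso
            rw [hc2, show f6 ((2+1) % 6) = -1 by decide] at e3
            rw [Int.cast_neg, Int.cast_one] at e3
            apply htwoN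
            linear_combination -e3
          · exfalso
            rw [hc1, show f6 3 = -1 by decide] at e2
            rw [Int.cast_neg, Int.cast_one, neg_eq_zero] at e2
            exact honeN e2
          · exfalso
            rw [hc1, show f6 4 = -1 by decide] at e2
            rw [Int.cast_neg, Int.cast_one, neg_eq_zero] at e2
            exact honeN e2
          · omega
        exact Nat.Coprime.mul_dvd_of_dvd_of_dvd hco h6 e1
  -- conclude
  unfold monomialMinimalSize
  apply le_antisymm
  · exact Nat.sInf_le ⟨by positivity, upper⟩
  · refine le_csInf ⟨6*m, ?_⟩ ?_
    · exact ⟨by positivity, upper⟩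
    rintro b ⟨hb, hbsol⟩
    exact Nat.le_of_dvd hb (lower b hb hbsol)

end Main

lemma coprime_six {m : ℕ} (hmo : Odd m) (hm3 : ¬ (3 ∣ m)) : Nat.Coprime 6 m := by
  have h2m : ¬ 2 ∣ m := by rcases hmo with ⟨j, hj⟩; omega
  have c2 : Nat.Coprime 2 m := (Nat.Prime.coprime_iff_not_dvd Nat.prime_two).mpr h2m
  have c3 : Nat.Coprime 3 m := (Nat.Prime.coprime_iff_not_dvd Nat.prime_three).mpr hm3
  exact (show (6:ℕ) = 2*3 by rfl) ▸ Nat.Coprime.mul c2 c3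


theorem stmt15 (k m : ℕ) (hk : 3 ≤ k) (hm : 2 ≤ m) (hmo : Odd m)
    (hm3 : ¬ (3 ∣ m)) (l : ℤ) (h2 : l ^ 2 ≡ 1 [ZMOD (k : ℤ)]) :
    ((m : ℤ) ≡ -l [ZMOD (k : ℤ)] →
      monomialMinimalSize (k * m) ((l * m + 2 : ℤ) : ZMod (k * m)) = 6 * m) ∧
    ((m : ℤ) ≡ l [ZMOD (k : ℤ)] →
      monomialMinimalSize (k * m) ((l * m - 2 : ℤ) : ZMod (k * m)) = 6 * m) := by
  have hm' : 3 ≤ m := by rcases hmo with ⟨j, hj⟩; omega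
  have hco : Nat.Coprime 6 m := coprime_six hmo hm3
  have d2 : (k:ℤ) ∣ l^2 - 1 := by
    have := Int.ModEq.dvd h2
    rw [show (1 - l^2 : ℤ) = -(l^2 - 1) by ring] at this
    exact dvd_neg.mp this
  constructor
  · intro hc
    have dml : (k:ℤ) ∣ (m:ℤ) + l := by
      have := Int.ModEq.dvd hc
      rw [show (-l - (m:ℤ) : ℤ) = -((m:ℤ) + l) by ring] at this
      exact dvd_neg.mp this
    have hd1 : (k:ℤ) ∣ l * m + 1 := by
      rw [show (l * (m:ℤ) + 1 : ℤ) = l * ((m:ℤ) + l) - (l^2 - 1) by ring]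
      exact dvd_sub (Dvd.dvd.mul_left dml l) d2
    exact main_case1 k m hk hm' hco l hd1
  · intro hc
    have dml : (k:ℤ) ∣ (m:ℤ) + (-l) := by
      have := Int.ModEq.dvd hc
      rw [show (l - (m:ℤ) : ℤ) = -((m:ℤ) + (-l)) by ring] at this
      exact dvd_neg.mp this
    have hd1 : (k:ℤ) ∣ (-l) * m + 1 := by
      rw [show ((-l) * (m:ℤ) + 1 : ℤ) = (-l) * ((m:ℤ) + (-l)) - (l^2 - 1) by ring]
      exact dvd_sub (Dvd.dvd.mul_left dml (-l)) d2
    have key := main_case1 k m hk hm' hco (-l) hd1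
    have hcast : (((-l) * m + 2 : ℤ) : ZMod (k * m)) = -((l * m - 2 : ℤ) : ZMod (k * m)) := by
      push_cast
      ring
    rw [hcast, size_neg] at key
    exact key

end Monomial
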